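/- Let k be a field with char(k) ≠ 2, let c₁, c₂ ∈ kˣ be such that the quaternion algebra Q = (c₁,c₂)_k is a division ring, and let n be a natural number. Then there exists a finitely generated, transcendental field extension k ⊆ K (for instance K = k(x₁,…,x_n)) and elements a₁,…,a_n ∈ Kˣ such that the hermitian form b on (Q_K)ⁿ = Q_K × ⋯ × Q_K defined by b((q₁,…,q_n),(q'₁,…,q'_n)) = Σ_r a_r·q_r·(q'_r)̄ (where ̄ denotes quaternion conjugation and Q_K = (c₁,c₂)_K is the base change of Q to K) is anisotropic: b(q,q) = 0 implies q = 0. -/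

import Mathlib

/-!
STATEMENT 2: Let `k` be a field with `char k ≠ 2`, let `c₁ c₂ ∈ kˣ` be such that the
quaternion algebra `Q = (c₁,c₂)_k` is a division ring, and let `n : ℕ`.  Then there is a
finitely generated, transcendental field extension `k ⊆ K` and units `a₁,…,aₙ ∈ Kˣ` such
that the hermitian form `b((q₁,…,qₙ),(q'₁,…,q'ₙ)) = Σ_r a_r·q_r·(q'_r)̄` on `(Q_K)ⁿ` is
anisotropic.
-/

open scoped Quaternion

universe u

open Polynomial

set_option synthInstance.maxHeartbeats 1000000
set_option maxHeartbeats 1000000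

namespace St2

/-- A diagonal quadratic form with coefficients `d` is anisotropic. -/
def Aniso (F : Type*) [CommRing F] {σ : Type*} [Fintype σ] (d : σ → F) : Prop :=
  ∀ v : σ → F, ∑ i, d i * v i ^ 2 = 0 → v = 0

lemma coeff_sq_top {F : Type*} [CommRing F] {p : Polynomial F} {D : ℕ}
    (hp : p.natDegree ≤ D) : (p ^ 2).coeff (2 * D) = p.coeff D ^ 2 := by
  rw [sq, sq, Polynomial.coeff_mul]
  refine (Finset.sum_eq_single (D, D) ?_ ?_).trans (by ring)
  · rintro ⟨a, b⟩ hab hne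
    rw [Finset.HasAntidiagonal.mem_antidiagonal] at hab
    have h2 : ¬(a = D ∧ b = D) := by simpa [Prod.ext_iff] using hne
    dsimp only
    rcases lt_or_ge D a with h | h
    · rw [Polynomial.coeff_eq_zero_of_natDegree_lt (lt_of_le_of_lt hp h), zero_mul]
    · have hb : D < b := by omega
      rw [Polynomial.coeff_eq_zero_of_natDegree_lt (lt_of_le_of_lt hp hb), mul_zero]
  · intro h
    exact absurd (Finset.HasAntidiagonal.mem_antidiagonal.mpr (by omega)) h

lemma coeff_sq_hi {F : Type*} [CommRing F] {p : Polynomial F} {D m : ℕ}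
    (hp : p.natDegree ≤ D) (hm : 2 * D < m) : (p ^ 2).coeff m = 0 := by
  apply Polynomial.coeff_eq_zero_of_natDegree_lt
  calc (p ^ 2).natDegree ≤ 2 * p.natDegree := Polynomial.natDegree_pow_le
    _ ≤ 2 * D := by omega
    _ < m := hm

lemma exists_top_coeff {F : Type*} [Semiring F] {τ : Type*} [Fintype τ] (f : τ → Polynomial F)
    (hf : ∃ s, f s ≠ 0) : ∃ D, (∀ s, (f s).natDegree ≤ D) ∧ ∃ s, (f s).coeff D ≠ 0 := by
  classical
  obtain ⟨s₀, hs₀⟩ := hf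
  obtain ⟨s₁, hs₁, hmax⟩ := Finset.exists_max_image
      (Finset.univ.filter fun s => f s ≠ 0) (fun s => (f s).natDegree)
      ⟨s₀, by simp [hs₀]⟩
  have hne : f s₁ ≠ 0 := by simpa using hs₁
  refine ⟨(f s₁).natDegree, fun s => ?_, s₁, ?_⟩
  · by_cases h : f s = 0
    · simp [h]
    · exact hmax s (by simp [h])
  · simpa [Polynomial.coeff_natDegree] using Polynomial.leadingCoeff_ne_zero.mpr hne

/-- The key Springer-type degree argument over a polynomial ring:
if `⟨d⟩` and `⟨e⟩` are anisotropic over `F`, then `⟨d⟩ ⟂ X·⟨e⟩` is anisotropic over `F[X]`. -/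
lemma aniso_polynomial {F : Type*} [Field F] {σ σ' : Type*} [Fintype σ] [Fintype σ']
    {d : σ → F} {e : σ' → F} (hd : Aniso F d) (he : Aniso F e)
    (v : σ → Polynomial F) (w : σ' → Polynomial F)
    (hsum : (∑ i, Polynomial.C (d i) * v i ^ 2)
      + Polynomial.X * ∑ j, Polynomial.C (e j) * w j ^ 2 = 0) :
    (∀ i, v i = 0) ∧ (∀ j, w j = 0) := by
  classical
  have main : ∀ s : σ ⊕ σ', Sum.elim v w s = 0 := by
    by_contra hcon
    push_neg at hcon
    obtain ⟨D, hD, s₂, hs₂⟩ := exists_top_coeff _ hcon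
    have hDv : ∀ i, (v i).natDegree ≤ D := fun i => hD (Sum.inl i)
    have hDw : ∀ j, (w j).natDegree ≤ D := fun j => hD (Sum.inr j)
    set A := ∑ i, Polynomial.C (d i) * v i ^ 2 with hA
    set B := ∑ j, Polynomial.C (e j) * w j ^ 2 with hB
    have hcoeffA : ∀ m, A.coeff m = ∑ i, d i * (v i ^ 2).coeff m := by
      intro m
      rw [hA, Polynomial.finset_sum_coeff]
      exact Finset.sum_congr rfl fun i _ => Polynomial.coeff_C_mul _
    have hcoeffB : ∀ m, B.coeff m = ∑ j, e j * (w j ^ 2).coeff m := by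
      intro m
      rw [hB, Polynomial.finset_sum_coeff]
      exact Finset.sum_congr rfl fun j _ => Polynomial.coeff_C_mul _
    -- coefficient at 2D+1 : kills the w-block top coefficients
    have hw : ∀ j, (w j).coeff D = 0 := by
      have h1 : (A + Polynomial.X * B).coeff (2 * D + 1) = 0 := by rw [hsum]; simp
      rw [Polynomial.coeff_add, Polynomial.coeff_X_mul] at h1
      have hA1 : A.coeff (2 * D + 1) = 0 := by
        rw [hcoeffA]
        exact Finset.sum_eq_zero fun i _ => by
          rw [coeff_sq_hi (hDv i) (by omega), mul_zero]
      have hB1 : B.coeff (2 * D) = ∑ j, e j * (w j).coeff D ^ 2 := by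
        rw [hcoeffB]
        exact Finset.sum_congr rfl fun j _ => by rw [coeff_sq_top (hDw j)]
      rw [hA1, zero_add, hB1] at h1
      have := he (fun j => (w j).coeff D) h1
      exact fun j => congrFun this j
    -- coefficient at 2D : kills the v-block top coefficients
    have hv : ∀ i, (v i).coeff D = 0 := by
      have h1 : (A + Polynomial.X * B).coeff (2 * D) = 0 := by rw [hsum]; simp
      rw [Polynomial.coeff_add] at h1
      have hXB : (Polynomial.X * B).coeff (2 * D) = 0 := by
        have hXB' : Polynomial.X * B = ∑ j, Polynomial.C (e j) * (Polynomial.X * w j ^ 2) := by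
          rw [hB, Finset.mul_sum]
          exact Finset.sum_congr rfl fun j _ => by ring
        rw [hXB', Polynomial.finset_sum_coeff]
        apply Finset.sum_eq_zero
        intro j _
        rw [Polynomial.coeff_C_mul]
        rcases eq_or_ne (w j) 0 with h0 | h0
        · simp [h0]
        · have hlt : (w j).natDegree < D := by
            rcases lt_or_eq_of_le (hDw j) with h | h
            · exact h
            · exact absurd (by rw [Polynomial.leadingCoeff, h]; exact hw j)
                (Polynomial.leadingCoeff_ne_zero.mpr h0)
          have : (Polynomial.X * w j ^ 2).natDegree < 2 * D := by
            calc (Polynomial.X * w j ^ 2).natDegree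
                ≤ Polynomial.X.natDegree + (w j ^ 2).natDegree := Polynomial.natDegree_mul_le
              _ ≤ 1 + 2 * (w j).natDegree := by
                  have := Polynomial.natDegree_pow_le (p := w j) (n := 2)
                  simp only [Polynomial.natDegree_X]
                  omega
              _ < 2 * D := by omega
          rw [Polynomial.coeff_eq_zero_of_natDegree_lt this, mul_zero]
      have hA1 : A.coeff (2 * D) = ∑ i, d i * (v i).coeff D ^ 2 := by
        rw [hcoeffA]
        exact Finset.sum_congr rfl fun i _ => by rw [coeff_sq_top (hDv i)]
      rw [hXB, add_zero, hA1] at h1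
      have := hd (fun i => (v i).coeff D) h1
      exact fun i => congrFun this i
    cases s₂ with
    | inl i => exact hs₂ (hv i)
    | inr j => exact hs₂ (hw j)
  exact ⟨fun i => main (Sum.inl i), fun j => main (Sum.inr j)⟩

lemma tower_ratfunc (k F : Type*) [Field k] [Field F] [Algebra k F] :
    IsScalarTower k F (RatFunc F) :=
  IsScalarTower.of_algebraMap_eq fun x => by
    rw [IsScalarTower.algebraMap_apply k (Polynomial F) (RatFunc F),
      IsScalarTower.algebraMap_apply k F (Polynomial F),
      ← IsScalarTower.algebraMap_apply F (Polynomial F) (RatFunc F)]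

lemma algebraMap_ratfunc_eq_aeval {F : Type*} [Field F] (p : Polynomial F) :
    algebraMap (Polynomial F) (RatFunc F) p = Polynomial.aeval RatFunc.X p := by
  have h : (IsScalarTower.toAlgHom F (Polynomial F) (RatFunc F))
      = Polynomial.aeval (RatFunc.X : RatFunc F) := by
    apply Polynomial.algHom_ext
    simp [RatFunc.algebraMap_X]
  calc algebraMap (Polynomial F) (RatFunc F) p
      = (IsScalarTower.toAlgHom F (Polynomial F) (RatFunc F)) p := rfl
    _ = Polynomial.aeval RatFunc.X p := by rw [h]

lemma transcendental_ratfunc_X (F : Type*) [Field F] :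
    Transcendental F (RatFunc.X : RatFunc F) := by
  rw [transcendental_iff]
  intro p hp
  apply RatFunc.algebraMap_injective F
  rw [map_zero, algebraMap_ratfunc_eq_aeval, hp]

lemma mem_adjoin_of_poly {k F : Type*} [Field k] [Field F] [Algebra k F]
    (T : IntermediateField k (RatFunc F)) (hF : ∀ c : F, algebraMap F (RatFunc F) c ∈ T)
    (hX : (RatFunc.X : RatFunc F) ∈ T) (p : Polynomial F) :
    algebraMap (Polynomial F) (RatFunc F) p ∈ T := by
  rw [algebraMap_ratfunc_eq_aeval, Polynomial.aeval_def, Polynomial.eval₂_eq_sum_range]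
  apply sum_mem
  intro i _
  exact mul_mem (hF _) (pow_mem hX i)

lemma adjoin_ratfunc_top {k F : Type*} [Field k] [Field F] [Algebra k F] (S : Finset F)
    (hS : IntermediateField.adjoin k (S : Set F) = ⊤) :
    IntermediateField.adjoin k
      ((algebraMap F (RatFunc F) '' (S : Set F)) ∪ {RatFunc.X}) = ⊤ := by
  classical
  haveI := tower_ratfunc k F
  rw [eq_top_iff]
  rintro z -
  set T := IntermediateField.adjoin k
    ((algebraMap F (RatFunc F) '' (S : Set F)) ∪ {RatFunc.X}) with hT
  have hX : (RatFunc.X : RatFunc F) ∈ T := IntermediateField.subset_adjoin _ _ (by simp)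
  have hF : ∀ c : F, algebraMap F (RatFunc F) c ∈ T := by
    intro c
    have hc : c ∈ IntermediateField.adjoin k (S : Set F) := by rw [hS]; trivial
    have hmem : algebraMap F (RatFunc F) c ∈ (IntermediateField.adjoin k (S : Set F)).map
        (IsScalarTower.toAlgHom k F (RatFunc F)) := ⟨c, hc, rfl⟩
    rw [IntermediateField.adjoin_map] at hmem
    refine IntermediateField.adjoin.mono _ _ _ ?_ hmem
    rintro x ⟨y, hy, rfl⟩
    simp only [Set.mem_union, Set.mem_image, Finset.mem_coe, Set.mem_singleton_iff,
      IsScalarTower.coe_toAlgHom']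
    exact Or.inl ⟨y, hy, rfl⟩
  have hz : z = algebraMap _ _ z.num / algebraMap _ _ z.denom := (RatFunc.num_div_denom z).symm
  rw [hz]
  exact div_mem (mem_adjoin_of_poly T hF hX _) (mem_adjoin_of_poly T hF hX _)

lemma aniso_ratfunc {F : Type*} [Field F] {σ σ' : Type*} [Fintype σ] [Fintype σ']
    {d : σ → F} {e : σ' → F} (hd : Aniso F d) (he : Aniso F e) :
    Aniso (RatFunc F) (Sum.elim (fun i => algebraMap F (RatFunc F) (d i))
      (fun j => RatFunc.X * algebraMap F (RatFunc F) (e j))) := by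
  classical
  intro V hV
  obtain ⟨b, hb⟩ := IsLocalization.exist_integer_multiples_of_finite
      (nonZeroDivisors (Polynomial F)) V
  have hb' : ∀ s, ∃ p : Polynomial F, algebraMap (Polynomial F) (RatFunc F) p
      = (b : Polynomial F) • V s := fun s => hb s
  choose u hu using hb'
  set β := algebraMap (Polynomial F) (RatFunc F) with hβ
  have hbV : ∀ s, β (u s) = β (b : Polynomial F) * V s := by
    intro s; rw [hu s, Algebra.smul_def]
  have hβC : ∀ x : F, β (Polynomial.C x) = algebraMap F (RatFunc F) x := by
    intro x
    rw [hβ, ← Polynomial.algebraMap_eq, ← IsScalarTower.algebraMap_apply]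
  have hβX : β Polynomial.X = RatFunc.X := RatFunc.algebraMap_X
  rw [Fintype.sum_sum_type] at hV
  simp only [Sum.elim_inl, Sum.elim_inr] at hV
  have hre : ∑ j, (RatFunc.X * algebraMap F (RatFunc F) (e j)) * V (Sum.inr j) ^ 2
      = RatFunc.X * ∑ j, algebraMap F (RatFunc F) (e j) * V (Sum.inr j) ^ 2 := by
    rw [Finset.mul_sum]
    exact Finset.sum_congr rfl fun j _ => by ring
  rw [hre] at hV
  -- the candidate polynomial identity
  have key : (∑ i, Polynomial.C (d i) * u (Sum.inl i) ^ 2)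
      + Polynomial.X * ∑ j, Polynomial.C (e j) * u (Sum.inr j) ^ 2 = 0 := by
    apply RatFunc.algebraMap_injective F
    rw [map_zero, map_add, map_mul, map_sum, map_sum]
    have h1 : ∀ i, β (Polynomial.C (d i) * u (Sum.inl i) ^ 2)
        = β (b : Polynomial F) ^ 2 * (algebraMap F (RatFunc F) (d i) * V (Sum.inl i) ^ 2) := by
      intro i
      rw [map_mul, map_pow, hbV, hβC, mul_pow]; ring
    have h2 : ∀ j, β (Polynomial.C (e j) * u (Sum.inr j) ^ 2)
        = β (b : Polynomial F) ^ 2 * (algebraMap F (RatFunc F) (e j) * V (Sum.inr j) ^ 2) := by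
      intro j
      rw [map_mul, map_pow, hbV, hβC, mul_pow]; ring
    simp only [← hβ, h1, h2, hβX]
    rw [← Finset.mul_sum, ← Finset.mul_sum]
    linear_combination (β (b : Polynomial F) ^ 2) * hV
  obtain ⟨h1, h2⟩ := aniso_polynomial hd he (fun i => u (Sum.inl i)) (fun j => u (Sum.inr j)) key
  have hu0 : ∀ s, u s = 0 := fun s => by cases s with
    | inl i => exact h1 i
    | inr j => exact h2 j
  have hbne : β (b : Polynomial F) ≠ 0 :=
    RatFunc.algebraMap_ne_zero (nonZeroDivisors.coe_ne_zero b)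
  funext s
  have := hbV s
  rw [hu0 s, map_zero] at this
  exact (mul_eq_zero.mp this.symm).resolve_left hbne

lemma Aniso.comp_equiv {F : Type*} [CommRing F] {σ τ : Type*} [Fintype σ] [Fintype τ]
    (E : τ ≃ σ) {d : σ → F} (hd : Aniso F d) {d' : τ → F} (hdd : ∀ t, d' t = d (E t)) :
    Aniso F d' := by
  intro v hv
  have h2 : ∑ i : σ, d i * (v (E.symm i)) ^ 2 = 0 := by
    rw [← Equiv.sum_comp E (fun i => d i * v (E.symm i) ^ 2)]
    rw [← hv]
    exact Finset.sum_congr rfl fun t _ => by rw [hdd, Equiv.symm_apply_apply]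
  have h3 := hd _ h2
  funext t
  have := congrFun h3 (E t)
  simpa using this

lemma aniso_map {F : Type*} [Field F] {σ : Type*} [Fintype σ] {d : σ → F} (hd : Aniso F d) :
    Aniso (RatFunc F) (fun i => algebraMap F (RatFunc F) (d i)) := by
  have he : Aniso F (fun j : PEmpty.{1} => (0 : F)) := by
    intro v _; funext j; exact j.elim
  have h := aniso_ratfunc hd he
  exact Aniso.comp_equiv (Equiv.sumEmpty σ PEmpty.{1}).symm h (fun t => by simp)

/-- Splitting off the last block of a `(n+1) × m` index set. -/
def blockEquiv (n m : ℕ) : Fin (n + 1) × Fin m ≃ (Fin n × Fin m) ⊕ Fin m where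
  toFun p := if h : (p.1 : ℕ) < n then Sum.inl (⟨p.1, h⟩, p.2) else Sum.inr p.2
  invFun q := q.elim (fun q => (q.1.castSucc, q.2)) (fun s => (Fin.last n, s))
  left_inv := by
    rintro ⟨r, s⟩
    by_cases h : (r : ℕ) < n
    · simp only [h, dif_pos]
      simp [Fin.ext_iff]
    · simp only [h, dif_neg, not_false_iff]
      have : (r : ℕ) = n := by omega
      simp [Fin.ext_iff, this]
  right_inv := by
    rintro (⟨r, s⟩ | s)
    · have h : ((r.castSucc : Fin (n + 1)) : ℕ) < n := by simp [r.is_lt]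
      simp only [Sum.elim_inl]
      simp [h, Fin.ext_iff]
    · have h : ¬ ((Fin.last n : Fin (n + 1)) : ℕ) < n := by simp
      simp only [Sum.elim_inr]
      simp [h]

/-- Main induction: for every `n` there is a finitely generated field extension `K/k`
together with units `a₁,…,aₙ` such that `⟨a₁,…,aₙ⟩ ⊗ ⟨Nv⟩` is anisotropic over `K`. -/
theorem aux {k : Type u} [Field k] (Nv : Fin 4 → k) (hN : Aniso k Nv) (n : ℕ) :
    ∃ (K : Type u) (_ : Field K) (_ : Algebra k K) (S : Finset K) (a : Fin n → Kˣ),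
      IntermediateField.adjoin k (S : Set K) = ⊤ ∧
      Aniso K (fun p : Fin n × Fin 4 => (a p.1 : K) * algebraMap k K (Nv p.2)) ∧
      Aniso K (fun s => algebraMap k K (Nv s)) := by
  induction n with
  | zero =>
      refine ⟨k, inferInstance, inferInstance, ∅, fun r => r.elim0, ?_, ?_, ?_⟩
      · rw [Finset.coe_empty, IntermediateField.adjoin_empty]
        ext x
        simp [IntermediateField.mem_bot]
      · intro v _; funext p; exact p.1.elim0
      · have heq : (fun s => algebraMap k k (Nv s)) = Nv := funext fun s => by simp
        rw [heq]; exact hN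
  | succ n ih =>
      obtain ⟨K, fK, aK, S, a, hS, hbig, hNv⟩ := ih
      letI := fK
      letI := aK
      haveI := tower_ratfunc k K
      classical
      refine ⟨RatFunc K, inferInstance, inferInstance,
        (S.image (algebraMap K (RatFunc K))) ∪ {RatFunc.X},
        Fin.snoc (fun r => Units.map (algebraMap K (RatFunc K) : K →* RatFunc K) (a r))
          (Units.mk0 RatFunc.X RatFunc.X_ne_zero), ?_, ?_, ?_⟩
      · have := adjoin_ratfunc_top (k := k) S hS
        rw [← this]
        congr 1
        simp [Finset.coe_union, Finset.coe_image]
      · apply Aniso.comp_equiv (blockEquiv n 4) (aniso_ratfunc hbig hNv)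
        rintro ⟨r, s⟩
        by_cases h : (r : ℕ) < n
        · simp only [blockEquiv, Equiv.coe_fn_mk, h, dif_pos, Sum.elim_inl]
          simp only [Fin.snoc, h, dif_pos, cast_eq, Units.coe_map, MonoidHom.coe_coe]
          rw [map_mul, ← IsScalarTower.algebraMap_apply k K (RatFunc K)]
          rfl
        · simp only [blockEquiv, Equiv.coe_fn_mk, h, dif_neg, not_false_iff, Sum.elim_inr]
          simp only [Fin.snoc, h, dif_neg, not_false_iff, cast_eq, Units.val_mk0]
          rw [← IsScalarTower.algebraMap_apply k K (RatFunc K)]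
      · have heq : (fun s => algebraMap k (RatFunc K) (Nv s))
            = fun s => algebraMap K (RatFunc K) (algebraMap k K (Nv s)) :=
          funext fun s => IsScalarTower.algebraMap_apply k K (RatFunc K) (Nv s)
        rw [heq]
        exact aniso_map hNv

end St2

open St2 in
theorem statement2 {k : Type u} [Field k] (h2 : (2 : k) ≠ 0) (c₁ c₂ : k)
    (hc₁ : c₁ ≠ 0) (hc₂ : c₂ ≠ 0)
    -- `Q = (c₁,c₂)_k` is a division ring
    (hdiv : ∀ x : ℍ[k, c₁, c₂], x ≠ 0 → IsUnit x) (n : ℕ) :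
    ∃ (K : Type u) (_ : Field K) (_ : Algebra k K),
      -- `k ⊆ K` is a finitely generated field extension
      (⊤ : IntermediateField k K).FG ∧
      -- which is transcendental (not algebraic)
      ¬ Algebra.IsAlgebraic k K ∧
      -- and there are units `a₁, …, aₙ` of `K` such that the hermitian form
      -- `b(q, q') = Σ_r a_r·q_r·conj(q'_r)` on `(Q_K)ⁿ` is anisotropic
      ∃ a : Fin n → Kˣ,
        ∀ q : Fin n → ℍ[K, algebraMap k K c₁, algebraMap k K c₂],
          (∑ r, (a r : K) • (q r * star (q r))) = 0 → q = 0 := by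
  classical
  set Nv : Fin 4 → k := ![1, -c₁, -c₂, c₁ * c₂] with hNvdef
  -- the norm form of the quaternion algebra is anisotropic over `k`
  have hN : Aniso k Nv := by
    intro v hv
    set q : ℍ[k, c₁, c₂] := ⟨v 0, v 1, v 2, v 3⟩ with hqdef
    have hre : (q * star q).re = ∑ s, Nv s * v s ^ 2 := by
      rw [Fin.sum_univ_four]
      show q.re * (star q).re + c₁ * q.imI * (star q).imI + c₂ * q.imJ * (star q).imJ
          + 0 * c₂ * q.imJ * (star q).imK - c₁ * c₂ * q.imK * (star q).imK = _
      simp only [QuaternionAlgebra.re_star, QuaternionAlgebra.imI_star,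
        QuaternionAlgebra.imJ_star, QuaternionAlgebra.imK_star, hNvdef]
      show v 0 * (v 0 + 0 * v 1) + c₁ * v 1 * (-v 1) + c₂ * v 2 * (-v 2) + 0 * c₂ * v 2 * (-v 3) - c₁ * c₂ * v 3 * (-v 3) = _
      simp only [Matrix.cons_val_zero, Matrix.cons_val_one, Matrix.head_cons,
        Matrix.cons_val_two, Matrix.tail_cons, Matrix.cons_val_three]
      ring
    have hqq : q * star q = 0 := by
      have h := QuaternionAlgebra.mul_star_eq_coe (a := q)
      rw [hre, hv] at h
      simpa using h
    have hq0 : q = 0 := by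
      by_contra hne
      obtain ⟨w, hw⟩ := hdiv q hne
      have hstar : star q = 0 := by
        have h1 : (↑(w⁻¹) : ℍ[k, c₁, c₂]) * (q * star q) = 0 := by rw [hqq, mul_zero]
        rw [← hw, ← mul_assoc] at h1
        simpa [Units.inv_mul] using h1
      have : q = 0 := by
        have := congrArg star hstar
        simpa using this
      exact hne this
    funext s
    fin_cases s
    · exact congrArg QuaternionAlgebra.re hq0
    · exact congrArg QuaternionAlgebra.imI hq0
    · exact congrArg QuaternionAlgebra.imJ hq0
    · exact congrArg QuaternionAlgebra.imK hq0
  obtain ⟨K, fK, aK, S, a, hS, hbig, hNvK⟩ := aux Nv hN n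
  letI := fK
  letI := aK
  haveI := tower_ratfunc k K
  -- the final field : one more transcendental step
  refine ⟨RatFunc K, inferInstance, inferInstance, ?_, ?_, ?_⟩
  · exact ⟨(S.image (algebraMap K (RatFunc K))) ∪ {RatFunc.X}, by
      have := adjoin_ratfunc_top (k := k) S hS
      rw [← this]
      congr 1
      simp [Finset.coe_union, Finset.coe_image]⟩
  · intro h
    have hX := transcendental_ratfunc_X K
    have halg : IsAlgebraic k (RatFunc.X : RatFunc K) := h.isAlgebraic _
    exact hX (halg.extendScalars (algebraMap k K).injective)
  · -- the units and anisotropy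
    refine ⟨fun r => Units.map (algebraMap K (RatFunc K) : K →* RatFunc K) (a r), ?_⟩
    have hbig' : Aniso (RatFunc K) (fun p : Fin n × Fin 4 =>
        ((Units.map (algebraMap K (RatFunc K) : K →* RatFunc K) (a p.1) : (RatFunc K)ˣ)
          : RatFunc K) * algebraMap k (RatFunc K) (Nv p.2)) := by
      apply Aniso.comp_equiv (Equiv.refl _) (aniso_map hbig)
      intro t
      simp only [Equiv.refl_apply, Units.coe_map, MonoidHom.coe_coe, map_mul]
      rw [← IsScalarTower.algebraMap_apply k K (RatFunc K)]
    intro q hq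
    set a' : Fin n → (RatFunc K)ˣ :=
      fun r => Units.map (algebraMap K (RatFunc K) : K →* RatFunc K) (a r) with ha'
    set v : Fin n × Fin 4 → RatFunc K := fun p =>
      ![(q p.1).re, (q p.1).imI, (q p.1).imJ, (q p.1).imK] p.2 with hvdef
    have hterm : ∀ r, ((a' r : RatFunc K) • (q r * star (q r)))
        = ((((a' r : RatFunc K) * (q r * star (q r)).re : RatFunc K))
            : ℍ[RatFunc K, algebraMap k (RatFunc K) c₁, algebraMap k (RatFunc K) c₂]) := by
      intro r
      conv_lhs => rw [QuaternionAlgebra.mul_star_eq_coe (a := q r)]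
      rw [QuaternionAlgebra.smul_coe]
    have hsum0 : ∑ r, ((a' r : RatFunc K) * (q r * star (q r)).re) = 0 := by
      apply QuaternionAlgebra.coe_injective (c₁ := algebraMap k (RatFunc K) c₁)
        (c₂ := 0) (c₃ := algebraMap k (RatFunc K) c₂)
      have hcast : (((∑ r, ((a' r : RatFunc K) * (q r * star (q r)).re)) : RatFunc K)
            : ℍ[RatFunc K, algebraMap k (RatFunc K) c₁, algebraMap k (RatFunc K) c₂])
          = ∑ r, ((((a' r : RatFunc K) * (q r * star (q r)).re) : RatFunc K)
            : ℍ[RatFunc K, algebraMap k (RatFunc K) c₁, algebraMap k (RatFunc K) c₂]) := by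
        rw [← QuaternionAlgebra.coe_algebraMap]
        exact map_sum (algebraMap (RatFunc K)
          ℍ[RatFunc K, algebraMap k (RatFunc K) c₁, algebraMap k (RatFunc K) c₂]) _ _
      rw [hcast]
      have heq2 : ∑ r, ((((a' r : RatFunc K) * (q r * star (q r)).re) : RatFunc K)
            : ℍ[RatFunc K, algebraMap k (RatFunc K) c₁, algebraMap k (RatFunc K) c₂])
          = ∑ r, ((a' r : RatFunc K) • (q r * star (q r))) :=
        Finset.sum_congr rfl fun r _ => (hterm r).symm
      rw [heq2, hq]
      simp
    have hv : ∑ p : Fin n × Fin 4,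
        ((a' p.1 : RatFunc K) * algebraMap k (RatFunc K) (Nv p.2)) * v p ^ 2 = 0 := by
      rw [Fintype.sum_prod_type, ← hsum0]
      apply Finset.sum_congr rfl
      intro r _
      rw [Fin.sum_univ_four]
      have hnr : (q r * star (q r)).re = (q r).re ^ 2
          - algebraMap k (RatFunc K) c₁ * (q r).imI ^ 2
          - algebraMap k (RatFunc K) c₂ * (q r).imJ ^ 2
          + algebraMap k (RatFunc K) c₁ * algebraMap k (RatFunc K) c₂ * (q r).imK ^ 2 := by
        show (q r).re * (star (q r)).re
            + algebraMap k (RatFunc K) c₁ * (q r).imI * (star (q r)).imI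
            + algebraMap k (RatFunc K) c₂ * (q r).imJ * (star (q r)).imJ
            + 0 * algebraMap k (RatFunc K) c₂ * (q r).imJ * (star (q r)).imK
            - algebraMap k (RatFunc K) c₁ * algebraMap k (RatFunc K) c₂
              * (q r).imK * (star (q r)).imK = _
        simp only [QuaternionAlgebra.re_star, QuaternionAlgebra.imI_star,
          QuaternionAlgebra.imJ_star, QuaternionAlgebra.imK_star]
        ring
      have hN0 : algebraMap k (RatFunc K) (Nv 0) = 1 := by
        rw [hNvdef]; simp
      have hN1 : algebraMap k (RatFunc K) (Nv 1) = -(algebraMap k (RatFunc K) c₁) := by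
        rw [hNvdef]; simp
      have hN2 : algebraMap k (RatFunc K) (Nv 2) = -(algebraMap k (RatFunc K) c₂) := by
        rw [hNvdef]; simp
      have hN3 : algebraMap k (RatFunc K) (Nv 3)
          = algebraMap k (RatFunc K) c₁ * algebraMap k (RatFunc K) c₂ := by
        rw [hNvdef]; simp
      simp only [hvdef, Matrix.cons_val_zero, Matrix.cons_val_one, Matrix.head_cons,
        Matrix.cons_val_two, Matrix.tail_cons, Matrix.cons_val_three,
        hN0, hN1, hN2, hN3, hnr]
      ring
    have hv0 := hbig' v hv
    funext r
    have h0 : v (r, 0) = 0 := congrFun hv0 (r, 0)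
    have h1 : v (r, 1) = 0 := congrFun hv0 (r, 1)
    have h2' : v (r, 2) = 0 := congrFun hv0 (r, 2)
    have h3 : v (r, 3) = 0 := congrFun hv0 (r, 3)
    exact QuaternionAlgebra.ext h0 h1 h2' h3
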